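/- Let (H,R) be a cotriangular Hopf algebra and p ∈ H a primitive element. Then the set I_p := {α ∈ H⁺ : R(α, p) = 0} is a two-sided ideal of H, and it coincides with {α ∈ H⁺ : R(p, α) = 0}. -/

import Mathlib

open TensorProduct

noncomputable section

/-- Convolution product of two `ℂ`-valued functionals on a `ℂ`-coalgebra. -/
def conv {C : Type} [AddCommGroup C] [Module ℂ C] [Coalgebra ℂ C]
    (f g : C →ₗ[ℂ] ℂ) : C →ₗ[ℂ] ℂ :=
  LinearMap.mul' ℂ ℂ ∘ₗ TensorProduct.map f g ∘ₗ Coalgebra.comul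

variable {H : Type} [Ring H] [HopfAlgebra ℂ H]

/-- `ℓ ⊗ g ↦ ε(ℓ) g`. -/
def dropLeft : H ⊗[ℂ] H →ₗ[ℂ] H :=
  (TensorProduct.lid ℂ H).toLinearMap ∘ₗ TensorProduct.map Coalgebra.counit LinearMap.id

/-- `ℓ ⊗ g ↦ ε(g) ℓ`. -/
def dropRight : H ⊗[ℂ] H →ₗ[ℂ] H :=
  (TensorProduct.rid ℂ H).toLinearMap ∘ₗ TensorProduct.map LinearMap.id Coalgebra.counit

/-- An R-form making `H` coquasitriangular: `R` is convolution invertible,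
`R(h, ℓg) = Σ R(h₁,g) R(h₂,ℓ)`, `R(gh, ℓ) = Σ R(g,ℓ₁) R(h,ℓ₂)`, and
`Σ R(h₁,g₁) h₂g₂ = Σ g₁h₁ R(h₂,g₂)`. -/
structure IsRForm (Rf : H ⊗[ℂ] H →ₗ[ℂ] ℂ) : Prop where
  invertible : ∃ Rf' : H ⊗[ℂ] H →ₗ[ℂ] ℂ,
    conv Rf Rf' = Coalgebra.counit ∧ conv Rf' Rf = Coalgebra.counit
  mul_right : Rf ∘ₗ TensorProduct.map LinearMap.id (LinearMap.mul' ℂ H) =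
    conv (Rf ∘ₗ TensorProduct.map LinearMap.id dropLeft)
      (Rf ∘ₗ TensorProduct.map LinearMap.id dropRight)
  mul_left : Rf ∘ₗ TensorProduct.map (LinearMap.mul' ℂ H) LinearMap.id =
    conv (Rf ∘ₗ TensorProduct.map dropRight LinearMap.id)
      (Rf ∘ₗ TensorProduct.map dropLeft LinearMap.id)
  comm_rel : (TensorProduct.lid ℂ H).toLinearMap
        ∘ₗ TensorProduct.map Rf (LinearMap.mul' ℂ H) ∘ₗ Coalgebra.comul =
      (TensorProduct.rid ℂ H).toLinearMap
        ∘ₗ TensorProduct.map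
            (LinearMap.mul' ℂ H ∘ₗ (TensorProduct.comm ℂ H H).toLinearMap) Rf
        ∘ₗ Coalgebra.comul

/-- A cotriangular structure on `H`: an R-form with additionally
`Σ R(h₁,g₁) R(g₂,h₂) = ε(g) ε(h)`, i.e. `R⁻¹ = R₂₁`. -/
structure IsCotriangular (Rf : H ⊗[ℂ] H →ₗ[ℂ] ℂ) extends IsRForm Rf : Prop where
  symm : conv Rf (Rf ∘ₗ (TensorProduct.comm ℂ H H).toLinearMap) = Coalgebra.counit

namespace CtAux

open Coalgebra

/-- Evaluate a convolution product on a point, given a Sweedler representation. -/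
lemma conv_repr {C : Type} [AddCommGroup C] [Module ℂ C] [Coalgebra ℂ C]
    (f g : C →ₗ[ℂ] ℂ) {a : C} {ι : Type} (r : Coalgebra.Repr ℂ a ι) :
    conv f g a = ∑ i ∈ r.index, f (r.left i) * g (r.right i) := by
  simp only [conv, LinearMap.comp_apply]
  rw [← r.eq]
  simp [map_sum]

/-- Tensor product of Sweedler representations. -/
def reprTmul {M N : Type} [AddCommGroup M] [Module ℂ M] [Coalgebra ℂ M]
    [AddCommGroup N] [Module ℂ N] [Coalgebra ℂ N] {x : M} {y : N}
    {ι κ : Type} (rx : Coalgebra.Repr ℂ x ι) (ry : Coalgebra.Repr ℂ y κ) :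
    Coalgebra.Repr ℂ (x ⊗ₜ[ℂ] y) (ι × κ) where
  index := rx.index ×ˢ ry.index
  left := fun ij => rx.left ij.1 ⊗ₜ[ℂ] ry.left ij.2
  right := fun ij => rx.right ij.1 ⊗ₜ[ℂ] ry.right ij.2
  eq := by
    have h0 : CoalgebraStruct.comul (R := ℂ) (x ⊗ₜ[ℂ] y) =
        TensorProduct.tensorTensorTensorComm ℂ M M N N
          (CoalgebraStruct.comul (R := ℂ) x ⊗ₜ[ℂ] CoalgebraStruct.comul (R := ℂ) y) := rfl
    rw [h0, ← rx.eq, ← ry.eq, Finset.sum_product]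
    simp only [sum_tmul, tmul_sum, map_sum, tensorTensorTensorComm_tmul]
    rw [Finset.sum_comm]

/-- Sweedler representation of `1`. -/
def reprOne : Coalgebra.Repr ℂ (1 : H) Unit :=
  ⟨(Finset.univ : Finset Unit), fun _ => 1, fun _ => 1, by
    simp [Algebra.TensorProduct.one_def]⟩

lemma sum_counit_right_smul {C : Type} [AddCommGroup C] [Module ℂ C] [Coalgebra ℂ C]
    {a : C} {ι : Type} (r : Coalgebra.Repr ℂ a ι) :
    ∑ i ∈ r.index, (counit (R := ℂ) (r.right i)) • r.left i = a := by
  have := Coalgebra.sum_tmul_counit_eq (R := ℂ) r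
  apply_fun (TensorProduct.rid ℂ C) at this
  simp only [map_sum, rid_tmul, one_smul] at this
  simpa using this

lemma sum_counit_left_smul {C : Type} [AddCommGroup C] [Module ℂ C] [Coalgebra ℂ C]
    {a : C} {ι : Type} (r : Coalgebra.Repr ℂ a ι) :
    ∑ i ∈ r.index, (counit (R := ℂ) (r.left i)) • r.right i = a := by
  have := Coalgebra.sum_counit_tmul_eq (R := ℂ) r
  apply_fun (TensorProduct.lid ℂ C) at this
  simp only [map_sum, lid_tmul, one_smul] at this
  simpa using this

lemma sum_apply_counit {C : Type} [AddCommGroup C] [Module ℂ C] [Coalgebra ℂ C]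
    (φ : C →ₗ[ℂ] ℂ) {a : C} {ι : Type} (r : Coalgebra.Repr ℂ a ι) :
    ∑ i ∈ r.index, φ (r.left i) * counit (R := ℂ) (r.right i) = φ a := by
  have : ∑ i ∈ r.index, φ (r.left i) * counit (R := ℂ) (r.right i)
      = φ (∑ i ∈ r.index, (counit (R := ℂ) (r.right i)) • r.left i) := by
    rw [map_sum]; simp [mul_comm]
  rw [this, sum_counit_right_smul]

lemma sum_counit_apply {C : Type} [AddCommGroup C] [Module ℂ C] [Coalgebra ℂ C]
    (φ : C →ₗ[ℂ] ℂ) {a : C} {ι : Type} (r : Coalgebra.Repr ℂ a ι) :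
    ∑ i ∈ r.index, counit (R := ℂ) (r.left i) * φ (r.right i) = φ a := by
  have : ∑ i ∈ r.index, counit (R := ℂ) (r.left i) * φ (r.right i)
      = φ (∑ i ∈ r.index, (counit (R := ℂ) (r.left i)) • r.right i) := by
    rw [map_sum]; simp
  rw [this, sum_counit_left_smul]

lemma conv_counit_right {C : Type} [AddCommGroup C] [Module ℂ C] [Coalgebra ℂ C]
    (f : C →ₗ[ℂ] ℂ) : conv f Coalgebra.counit = f := by
  apply LinearMap.ext; intro a
  rw [conv_repr f Coalgebra.counit (ℛ ℂ a), sum_apply_counit]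

lemma conv_assoc {C : Type} [AddCommGroup C] [Module ℂ C] [Coalgebra ℂ C]
    (f g h : C →ₗ[ℂ] ℂ) : conv (conv f g) h = conv f (conv g h) := by
  apply LinearMap.ext; intro a
  set r := ℛ ℂ a with hr
  have key := Coalgebra.sum_map_tmul_tmul_eq (R := ℂ) f g h a (repr := r)
    (a₁ := fun i => ℛ ℂ (r.left i)) (a₂ := fun i => ℛ ℂ (r.right i))
  apply_fun (LinearMap.mul' ℂ ℂ ∘ₗ TensorProduct.map LinearMap.id (LinearMap.mul' ℂ ℂ)) at key
  simp only [map_sum, LinearMap.comp_apply, TensorProduct.map_tmul, LinearMap.mul'_apply,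
    LinearMap.id_coe, id_eq] at key
  rw [conv_repr (conv f g) h r, conv_repr f (conv g h) r]
  calc ∑ i ∈ r.index, conv f g (r.left i) * h (r.right i)
      = ∑ i ∈ r.index, ∑ j ∈ (ℛ ℂ (r.left i)).index,
          f ((ℛ ℂ (r.left i)).left j) * (g ((ℛ ℂ (r.left i)).right j) * h (r.right i)) := by
        refine Finset.sum_congr rfl fun i _ => ?_
        rw [conv_repr f g (ℛ ℂ (r.left i)), Finset.sum_mul]
        exact Finset.sum_congr rfl fun j _ => by ring
    _ = ∑ i ∈ r.index, ∑ j ∈ (ℛ ℂ (r.right i)).index,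
          f (r.left i) * (g ((ℛ ℂ (r.right i)).left j) * h ((ℛ ℂ (r.right i)).right j)) :=
        key.symm
    _ = ∑ i ∈ r.index, f (r.left i) * conv g h (r.right i) := by
        refine Finset.sum_congr rfl fun i _ => ?_
        rw [conv_repr g h (ℛ ℂ (r.right i)), Finset.mul_sum]

lemma conv_eq_counit {C : Type} [AddCommGroup C] [Module ℂ C] [Coalgebra ℂ C]
    {f f' : C →ₗ[ℂ] ℂ} (h1 : conv f f = f) (h2 : conv f f' = Coalgebra.counit) :
    f = Coalgebra.counit := by
  calc f = conv f Coalgebra.counit := (conv_counit_right f).symm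
    _ = conv f (conv f f') := by rw [h2]
    _ = conv (conv f f) f' := (conv_assoc f f f').symm
    _ = conv f f' := by rw [h1]
    _ = Coalgebra.counit := h2


@[simp] lemma counit_tmul {M N : Type} [AddCommGroup M] [Module ℂ M] [Coalgebra ℂ M]
    [AddCommGroup N] [Module ℂ N] [Coalgebra ℂ N] (x : M) (y : N) :
    counit (R := ℂ) (x ⊗ₜ[ℂ] y) = counit (R := ℂ) x * counit (R := ℂ) y := by
  rw [TensorProduct.counit_tmul, smul_eq_mul, mul_comm]

variable {H : Type} [Ring H] [HopfAlgebra ℂ H]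

@[simp] lemma dropLeft_tmul (x y : H) :
    dropLeft (x ⊗ₜ[ℂ] y) = (counit (R := ℂ) x) • y := by simp [dropLeft]

@[simp] lemma dropRight_tmul (x y : H) :
    dropRight (x ⊗ₜ[ℂ] y) = (counit (R := ℂ) y) • x := by simp [dropRight]

variable (Rf : H ⊗[ℂ] H →ₗ[ℂ] ℂ)

/-- `x ↦ Rf (x ⊗ y)` as a linear map. -/
def rm (y : H) : H →ₗ[ℂ] ℂ := Rf ∘ₗ (TensorProduct.mk ℂ H H).flip y
/-- `y ↦ Rf (x ⊗ y)` as a linear map. -/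
def lm (x : H) : H →ₗ[ℂ] ℂ := Rf ∘ₗ TensorProduct.mk ℂ H H x

@[simp] lemma rm_apply (y x : H) : rm Rf y x = Rf (x ⊗ₜ[ℂ] y) := rfl
@[simp] lemma lm_apply (x y : H) : lm Rf x y = Rf (x ⊗ₜ[ℂ] y) := rfl

lemma rone (hR : IsRForm Rf) : rm Rf 1 = Coalgebra.counit := by
  obtain ⟨Rf', hff', -⟩ := hR.invertible
  refine conv_eq_counit (f' := rm Rf' 1) ?_ ?_
  · apply LinearMap.ext; intro h
    have e := LinearMap.congr_fun hR.mul_right (h ⊗ₜ[ℂ] ((1:H) ⊗ₜ[ℂ] (1:H)))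
    rw [conv_repr _ _ (reprTmul (ℛ ℂ h) (reprTmul (reprOne (H := H)) (reprOne (H := H))))] at e
    simp only [reprTmul, reprOne, Finset.sum_product, Finset.univ_unique, Finset.sum_singleton,
      LinearMap.comp_apply, TensorProduct.map_tmul, LinearMap.id_coe, id_eq,
      LinearMap.mul'_apply, mul_one, dropLeft_tmul, dropRight_tmul, Bialgebra.counit_one,
      one_smul, Finset.sum_const, smul_eq_mul] at e
    rw [conv_repr _ _ (ℛ ℂ h)]
    simp only [rm_apply]
    simpa using e.symm
  · apply LinearMap.ext; intro h
    have e := LinearMap.congr_fun hff' (h ⊗ₜ[ℂ] (1:H))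
    rw [conv_repr _ _ (reprTmul (ℛ ℂ h) (reprOne (H := H)))] at e
    simp only [reprTmul, reprOne, Finset.sum_product, Finset.univ_unique, Finset.sum_singleton,
      counit_tmul, Bialgebra.counit_one, mul_one] at e
    rw [conv_repr _ _ (ℛ ℂ h)]
    simpa using e

lemma lone (hR : IsRForm Rf) : lm Rf 1 = Coalgebra.counit := by
  obtain ⟨Rf', hff', -⟩ := hR.invertible
  refine conv_eq_counit (f' := lm Rf' 1) ?_ ?_
  · apply LinearMap.ext; intro h
    have e := LinearMap.congr_fun hR.mul_left (((1:H) ⊗ₜ[ℂ] (1:H)) ⊗ₜ[ℂ] h)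
    rw [conv_repr _ _ (reprTmul (reprTmul (reprOne (H := H)) (reprOne (H := H))) (ℛ ℂ h))] at e
    simp only [reprTmul, reprOne, Finset.sum_product, Finset.univ_unique, Finset.sum_singleton,
      LinearMap.comp_apply, TensorProduct.map_tmul, LinearMap.id_coe, id_eq,
      LinearMap.mul'_apply, mul_one, dropLeft_tmul, dropRight_tmul, Bialgebra.counit_one,
      one_smul, Finset.sum_const, smul_eq_mul] at e
    rw [conv_repr _ _ (ℛ ℂ h)]
    simp only [lm_apply]
    simpa using e.symm
  · apply LinearMap.ext; intro h
    have e := LinearMap.congr_fun hff' ((1:H) ⊗ₜ[ℂ] h)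
    rw [conv_repr _ _ (reprTmul (reprOne (H := H)) (ℛ ℂ h))] at e
    simp only [reprTmul, reprOne, Finset.sum_product, Finset.univ_unique, Finset.sum_singleton,
      counit_tmul, Bialgebra.counit_one, one_mul] at e
    rw [conv_repr _ _ (ℛ ℂ h)]
    simpa [Finset.sum_product] using e

/-- Sweedler representation of a primitive element. -/
def reprP {p : H} (hp : Coalgebra.comul (R := ℂ) p = p ⊗ₜ[ℂ] (1 : H) + (1 : H) ⊗ₜ[ℂ] p) :
    Coalgebra.Repr ℂ p Bool :=
  ⟨(Finset.univ : Finset Bool), fun b => cond b p 1, fun b => cond b 1 p, by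
    simp [Fintype.sum_bool, hp]⟩

lemma counit_p {p : H} (hp : Coalgebra.comul (R := ℂ) p = p ⊗ₜ[ℂ] (1 : H) + (1 : H) ⊗ₜ[ℂ] p) :
    counit (R := ℂ) p = 0 := by
  have h1 := Coalgebra.lTensor_counit_comul (R := ℂ) p
  rw [hp] at h1
  simp only [map_add, LinearMap.lTensor_tmul, Bialgebra.counit_one] at h1
  have h2 : (1 : H) ⊗ₜ[ℂ] (counit (R := ℂ) p) = 0 := by
    have := add_eq_left.mp h1
    exact this
  apply_fun (TensorProduct.rid ℂ H) at h2
  simp only [rid_tmul, map_zero] at h2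
  apply_fun (counit (R := ℂ) (A := H)) at h2
  simpa using h2

lemma mulp (hR : IsRForm Rf) {p : H}
    (hp : Coalgebra.comul (R := ℂ) p = p ⊗ₜ[ℂ] (1 : H) + (1 : H) ⊗ₜ[ℂ] p) (h α : H) :
    Rf ((h * α) ⊗ₜ[ℂ] p) =
      Rf (h ⊗ₜ[ℂ] p) * counit (R := ℂ) α + counit (R := ℂ) h * Rf (α ⊗ₜ[ℂ] p) := by
  have r1 : ∀ x : H, Rf (x ⊗ₜ[ℂ] (1 : H)) = counit (R := ℂ) x := fun x =>
    LinearMap.congr_fun (rone Rf hR) x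
  have e := LinearMap.congr_fun hR.mul_left ((h ⊗ₜ[ℂ] α) ⊗ₜ[ℂ] p)
  rw [conv_repr _ _ (reprTmul (reprTmul (ℛ ℂ h) (ℛ ℂ α)) (reprP hp))] at e
  simp only [reprTmul, reprP, Finset.sum_product, Fintype.sum_bool, cond_true, cond_false,
    LinearMap.comp_apply, TensorProduct.map_tmul, LinearMap.id_coe, id_eq,
    LinearMap.mul'_apply, dropLeft_tmul, dropRight_tmul, ← TensorProduct.smul_tmul',
    map_smul, smul_eq_mul] at e
  have Ehp : ∑ i ∈ (ℛ ℂ h).index,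
      counit (R := ℂ) ((ℛ ℂ h).right i) * Rf ((ℛ ℂ h).left i ⊗ₜ[ℂ] p) = Rf (h ⊗ₜ[ℂ] p) := by
    have := sum_apply_counit (rm Rf p) (ℛ ℂ h)
    simp only [rm_apply] at this
    rw [← this]
    exact Finset.sum_congr rfl fun i _ => mul_comm _ _
  have Eh1 : ∑ i ∈ (ℛ ℂ h).index,
      counit (R := ℂ) ((ℛ ℂ h).right i) * Rf ((ℛ ℂ h).left i ⊗ₜ[ℂ] (1:H))
        = counit (R := ℂ) h := by
    simp only [r1]
    rw [← sum_counit_apply (Coalgebra.counit) (ℛ ℂ h)]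
    exact Finset.sum_congr rfl fun i _ => mul_comm _ _
  have Eap : ∑ j ∈ (ℛ ℂ α).index,
      counit (R := ℂ) ((ℛ ℂ α).left j) * Rf ((ℛ ℂ α).right j ⊗ₜ[ℂ] p) = Rf (α ⊗ₜ[ℂ] p) := by
    have := sum_counit_apply (rm Rf p) (ℛ ℂ α)
    simpa using this
  have Ea1 : ∑ j ∈ (ℛ ℂ α).index,
      counit (R := ℂ) ((ℛ ℂ α).left j) * Rf ((ℛ ℂ α).right j ⊗ₜ[ℂ] (1:H))
        = counit (R := ℂ) α := by
    simp only [r1]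
    exact sum_counit_apply (Coalgebra.counit) (ℛ ℂ α)
  rw [e, ← Ehp, ← Eh1, ← Eap, ← Ea1, Finset.sum_mul_sum, Finset.sum_mul_sum,
    ← Finset.sum_add_distrib]
  refine Finset.sum_congr rfl fun i _ => ?_
  rw [← Finset.sum_add_distrib]
  refine Finset.sum_congr rfl fun j _ => ?_
  ring

lemma flipp (hR : IsCotriangular Rf) {p : H}
    (hp : Coalgebra.comul (R := ℂ) p = p ⊗ₜ[ℂ] (1 : H) + (1 : H) ⊗ₜ[ℂ] p) (h : H) :
    Rf (h ⊗ₜ[ℂ] p) + Rf (p ⊗ₜ[ℂ] h) = 0 := by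
  have r1 : ∀ x : H, Rf (x ⊗ₜ[ℂ] (1 : H)) = counit (R := ℂ) x := fun x =>
    LinearMap.congr_fun (rone Rf hR.toIsRForm) x
  have l1 : ∀ x : H, Rf ((1 : H) ⊗ₜ[ℂ] x) = counit (R := ℂ) x := fun x =>
    LinearMap.congr_fun (lone Rf hR.toIsRForm) x
  have e := LinearMap.congr_fun hR.symm (h ⊗ₜ[ℂ] p)
  rw [conv_repr _ _ (reprTmul (ℛ ℂ h) (reprP hp))] at e
  simp only [reprTmul, reprP, Finset.sum_product, Fintype.sum_bool, cond_true, cond_false,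
    LinearMap.comp_apply, LinearEquiv.coe_coe, TensorProduct.comm_tmul, counit_tmul,
    counit_p hp, mul_zero, r1, l1] at e
  rw [← e]
  have E1 : ∑ i ∈ (ℛ ℂ h).index,
      Rf ((ℛ ℂ h).left i ⊗ₜ[ℂ] p) * counit (R := ℂ) ((ℛ ℂ h).right i) = Rf (h ⊗ₜ[ℂ] p) := by
    have := sum_apply_counit (rm Rf p) (ℛ ℂ h)
    simpa using this
  have E2 : ∑ i ∈ (ℛ ℂ h).index,
      counit (R := ℂ) ((ℛ ℂ h).left i) * Rf (p ⊗ₜ[ℂ] (ℛ ℂ h).right i) = Rf (p ⊗ₜ[ℂ] h) := by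
    have := sum_counit_apply (lm Rf p) (ℛ ℂ h)
    simpa using this
  rw [Finset.sum_add_distrib, E1, E2]

end CtAux

/-- Let `(H,R)` be a cotriangular Hopf algebra and `p ∈ H` a primitive element.  Then
`I_p := {α ∈ H⁺ : R(α, p) = 0}` is a two-sided ideal of `H` (in particular a subspace),
and it coincides with `{α ∈ H⁺ : R(p, α) = 0}`. -/
theorem Ip_two_sided_ideal (Rf : H ⊗[ℂ] H →ₗ[ℂ] ℂ) (hR : IsCotriangular Rf)
    (p : H) (hp : Coalgebra.comul (R := ℂ) p = p ⊗ₜ[ℂ] (1 : H) + (1 : H) ⊗ₜ[ℂ] p) :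
    let Ip : Set H := {α : H | Coalgebra.counit α = (0 : ℂ) ∧ Rf (α ⊗ₜ[ℂ] p) = 0}
    (0 : H) ∈ Ip
    ∧ (∀ α β : H, α ∈ Ip → β ∈ Ip → α + β ∈ Ip)
    ∧ (∀ (c : ℂ) (α : H), α ∈ Ip → c • α ∈ Ip)
    ∧ (∀ α ∈ Ip, ∀ h : H, h * α ∈ Ip ∧ α * h ∈ Ip)
    ∧ Ip = {α : H | Coalgebra.counit α = (0 : ℂ) ∧ Rf (p ⊗ₜ[ℂ] α) = 0} := by
  intro Ip
  refine ⟨⟨by simp, by simp [TensorProduct.zero_tmul]⟩, ?_, ?_, ?_, ?_⟩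
  · rintro α β ⟨ha1, ha2⟩ ⟨hb1, hb2⟩
    exact ⟨by simp [ha1, hb1], by simp [TensorProduct.add_tmul, ha2, hb2]⟩
  · rintro c α ⟨h1, h2⟩
    exact ⟨by simp [h1], by simp [← TensorProduct.smul_tmul', h2]⟩
  · rintro α ⟨h1, h2⟩ h
    constructor
    · exact ⟨by simp [h1], by rw [CtAux.mulp Rf hR.toIsRForm hp h α]; simp [h1, h2]⟩
    · exact ⟨by simp [h1], by rw [CtAux.mulp Rf hR.toIsRForm hp α h]; simp [h1, h2]⟩
  · ext α
    simp only [Set.mem_setOf_eq]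
    constructor
    · rintro ⟨h1, h2⟩
      refine ⟨h1, ?_⟩
      have e := CtAux.flipp Rf hR hp α
      rw [h2, zero_add] at e
      exact e
    · rintro ⟨h1, h2⟩
      refine ⟨h1, ?_⟩
      have e := CtAux.flipp Rf hR hp α
      rw [h2, add_zero] at e
      exact e
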